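/- arXiv:2512.09551 — 3 statements merged into one kernel-verified Lean document; each statement's English description precedes it below -/
import Mathlib

section
/- The right Jacobian J_r(φ) = I − ((1−cos θ)/θ²)[φ]× + ((θ−sin θ)/θ³)[φ]×², with θ = ‖φ‖, satisfies J_r(0) = I, where the coefficient functions (1−cos θ)/θ² and (θ−sin θ)/θ³ are extended continuously at θ = 0 by 1/2 and 1/6 respectively; moreover, J_r(φ) is invertible for all φ with ‖φ‖ < 2π. -/
/-- The cross-product matrix [φ]× with [φ]× v = φ × v. -/
def crossMat (φ : Fin 3 → ℝ) : Matrix (Fin 3) (Fin 3) ℝ :=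
  !![0, -φ 2, φ 1; φ 2, 0, -φ 0; -φ 1, φ 0, 0]

/-- Euclidean norm on ℝ³. -/
noncomputable def enorm3 (φ : Fin 3 → ℝ) : ℝ := Real.sqrt (∑ i, φ i ^ 2)

/-- (1−cos θ)/θ², extended continuously at 0 by 1/2. -/
noncomputable def acoef (θ : ℝ) : ℝ := if θ = 0 then 1 / 2 else (1 - Real.cos θ) / θ ^ 2

/-- (θ−sin θ)/θ³, extended continuously at 0 by 1/6. -/
noncomputable def bcoef (θ : ℝ) : ℝ := if θ = 0 then 1 / 6 else (θ - Real.sin θ) / θ ^ 3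

/-- The right Jacobian J_r(φ) = I − ((1−cos θ)/θ²)[φ]× + ((θ−sin θ)/θ³)[φ]×². -/
noncomputable def rightJacobian (φ : Fin 3 → ℝ) : Matrix (Fin 3) (Fin 3) ℝ :=
  1 - acoef (enorm3 φ) • crossMat φ + bcoef (enorm3 φ) • crossMat φ ^ 2

lemma det_aux (a b : ℝ) (φ : Fin 3 → ℝ) :
    Matrix.det (1 - a • crossMat φ + b • crossMat φ ^ 2) =
      (1 - b * (φ 0 ^ 2 + φ 1 ^ 2 + φ 2 ^ 2)) ^ 2 + a ^ 2 * (φ 0 ^ 2 + φ 1 ^ 2 + φ 2 ^ 2) := by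
  simp [crossMat, Matrix.det_fin_three, pow_two, Matrix.mul_apply, Fin.sum_univ_succ,
    Matrix.one_apply]
  ring

/-- J_r(0) = I, and J_r(φ) is invertible for all φ with ‖φ‖ < 2π. -/
theorem stmt_9 :
    rightJacobian 0 = 1 ∧
    ∀ φ : Fin 3 → ℝ, enorm3 φ < 2 * Real.pi → IsUnit (rightJacobian φ) := by
  constructor
  · have h : crossMat 0 = 0 := by
      ext i j
      fin_cases i <;> fin_cases j <;>
        simp [crossMat, Matrix.vecHead, Matrix.vecTail]
    simp [rightJacobian, h]
  · intro φ hφ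
    rw [Matrix.isUnit_iff_isUnit_det, isUnit_iff_ne_zero]
    set θ := enorm3 φ with hθdef
    have hs : φ 0 ^ 2 + φ 1 ^ 2 + φ 2 ^ 2 = θ ^ 2 := by
      rw [hθdef, enorm3, Real.sq_sqrt (by positivity), Fin.sum_univ_three]
    rw [rightJacobian, det_aux, hs]
    have hθ0 : 0 ≤ θ := Real.sqrt_nonneg _
    rcases eq_or_lt_of_le hθ0 with h0 | hpos
    · simp [← h0, acoef, bcoef]
    have hne : θ ≠ 0 := ne_of_gt hpos
    have hcos : Real.cos θ ≠ 1 := by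
      intro h
      have := (Real.cos_eq_one_iff_of_lt_of_lt (by linarith [Real.pi_pos]) hφ).mp h
      exact hne this
    rw [acoef, bcoef, if_neg hne, if_neg hne]
    have key : (1 - (θ - Real.sin θ) / θ ^ 3 * θ ^ 2) ^ 2 +
        ((1 - Real.cos θ) / θ ^ 2) ^ 2 * θ ^ 2 =
        (Real.sin θ ^ 2 + (1 - Real.cos θ) ^ 2) / θ ^ 2 := by
      field_simp
      ring
    rw [key]
    have htrig : Real.sin θ ^ 2 + (1 - Real.cos θ) ^ 2 = 2 - 2 * Real.cos θ := by
      nlinarith [Real.sin_sq_add_cos_sq θ]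
    rw [htrig]
    have hclt : Real.cos θ < 1 := lt_of_le_of_ne (Real.cos_le_one θ) hcos
    exact ne_of_gt (div_pos (by linarith) (by positivity))
end

section
/- The determinant of the right Jacobian J_r(φ) equals 2(1 − cos θ)/θ² for θ = ‖φ‖ ≠ 0 (and 1 at φ = 0); in particular det J_r(φ) > 0 whenever 0 ≤ θ < 2π. -/
lemma enorm3_sq (φ : Fin 3 → ℝ) :
    enorm3 φ ^ 2 = φ 0 ^ 2 + φ 1 ^ 2 + φ 2 ^ 2 := by
  have h : (0:ℝ) ≤ ∑ i, φ i ^ 2 := by positivity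
  rw [enorm3, Real.sq_sqrt h, Fin.sum_univ_three]

lemma det_key (φ : Fin 3 → ℝ) :
    (rightJacobian φ).det
      = (1 - bcoef (enorm3 φ) * (φ 0 ^ 2 + φ 1 ^ 2 + φ 2 ^ 2)) ^ 2
        + acoef (enorm3 φ) ^ 2 * (φ 0 ^ 2 + φ 1 ^ 2 + φ 2 ^ 2) := by
  set a := acoef (enorm3 φ)
  set b := bcoef (enorm3 φ)
  rw [rightJacobian, pow_two]
  simp only [crossMat, Matrix.mul_fin_three]
  rw [Matrix.one_fin_three]
  simp only [Matrix.smul_of, Matrix.smul_cons, smul_eq_mul, Matrix.smul_empty,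
    Matrix.sub_apply, Matrix.add_apply, Matrix.of_apply]
  rw [Matrix.det_fin_three]
  simp only [Matrix.sub_apply, Matrix.add_apply, Matrix.cons_val', Matrix.cons_val_zero,
    Matrix.cons_val_one, Matrix.head_cons, Matrix.empty_val', Matrix.cons_val_fin_one,
    Matrix.head_fin_const, Matrix.cons_val_two, Matrix.tail_cons, Matrix.of_apply]
  ring

/-- det J_r(φ) = 2(1−cos θ)/θ² for θ = ‖φ‖ ≠ 0, det J_r(0) = 1, and
det J_r(φ) > 0 whenever θ < 2π. -/
theorem stmt_11 (φ : Fin 3 → ℝ) :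
    (enorm3 φ ≠ 0 →
      (rightJacobian φ).det = 2 * (1 - Real.cos (enorm3 φ)) / (enorm3 φ) ^ 2) ∧
    (φ = 0 → (rightJacobian φ).det = 1) ∧
    (enorm3 φ < 2 * Real.pi → 0 < (rightJacobian φ).det) := by
  set θ := enorm3 φ with hθ
  have hθ0 : 0 ≤ θ := Real.sqrt_nonneg _
  have hsq := enorm3_sq φ
  have hzero : θ = 0 → φ = 0 := by
    intro h
    have h2 : φ 0 ^ 2 + φ 1 ^ 2 + φ 2 ^ 2 = 0 := by
      rw [← hsq, ← hθ, h]; ring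
    have h0 : φ 0 = 0 := by nlinarith [sq_nonneg (φ 0), sq_nonneg (φ 1), sq_nonneg (φ 2)]
    have h1 : φ 1 = 0 := by nlinarith [sq_nonneg (φ 0), sq_nonneg (φ 1), sq_nonneg (φ 2)]
    have h2' : φ 2 = 0 := by nlinarith [sq_nonneg (φ 0), sq_nonneg (φ 1), sq_nonneg (φ 2)]
    funext i
    fin_cases i <;> simpa using ‹_›
  have hne : θ ≠ 0 → (rightJacobian φ).det = 2 * (1 - Real.cos θ) / θ ^ 2 := by
    intro h
    have hθpos : 0 < θ := lt_of_le_of_ne hθ0 (Ne.symm h)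
    rw [det_key, ← hsq, ← hθ, acoef, bcoef, if_neg h, if_neg h]
    have hs := Real.sin_sq_add_cos_sq θ
    field_simp
    linear_combination hs
  refine ⟨hne, ?_, ?_⟩
  · intro h
    have hθz : θ = 0 := by
      rw [hθ, h, enorm3]
      simp
    rw [det_key, ← hsq, ← hθ, hθz]
    simp [acoef, bcoef]
  · intro hlt
    rcases eq_or_ne θ 0 with h | h
    · have hφ := hzero h
      have : (rightJacobian φ).det = 1 := by
        rw [det_key, ← hsq, ← hθ, h]
        simp [acoef, bcoef]
      rw [this]; norm_num
    · rw [hne h]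
      have hθpos : 0 < θ := lt_of_le_of_ne hθ0 (Ne.symm h)
      have hcos : Real.cos θ < 1 := by
        rcases lt_or_ge (Real.cos θ) 1 with h1 | h1
        · exact h1
        · exfalso
          have hc1 : Real.cos θ = 1 := le_antisymm (Real.cos_le_one θ) h1
          have := (Real.cos_eq_one_iff_of_lt_of_lt
            (by linarith [Real.pi_pos] : -(2 * Real.pi) < θ) hlt).mp hc1
          exact h this
      have h2 : 0 < 2 * (1 - Real.cos θ) := by linarith
      exact div_pos h2 (by positivity)
end

section
/- For the sphere S², the inverse of the exponential retraction is well-defined on the open hemisphere: if s, s' ∈ S² with ⟨s, s'⟩ > −1 and s' ≠ −s, setting θ = arccos⟨s, s'⟩ and w = (θ/sin θ)(s' − ⟨s, s'⟩ s) (with w = 0 when s' = s), then w ∈ T_s S² (i.e., ⟨s, w⟩ = 0), ‖w‖ = θ, and R_s(w) = s cos‖w‖ + w sinc(‖w‖) = s'. -/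
open scoped Classical

noncomputable def sinc (x : ℝ) : ℝ := if x = 0 then 1 else Real.sin x / x

noncomputable def sphRetract (s w : EuclideanSpace ℝ (Fin 3)) : EuclideanSpace ℝ (Fin 3) :=
  Real.cos ‖w‖ • s + sinc ‖w‖ • w

/-- The inverse of the sphere exponential retraction is well-defined on the open
hemisphere: with θ = arccos⟨s,s'⟩ and w = (θ/sin θ)(s' − ⟨s,s'⟩s) (w = 0 when
s' = s), one has w ∈ T_s S², ‖w‖ = θ, and R_s(w) = s'. -/
theorem stmt_15 (s s' : EuclideanSpace ℝ (Fin 3)) (hs : ‖s‖ = 1) (hs' : ‖s'‖ = 1)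
    (hinner : (inner ℝ s s' : ℝ) > -1) (hne : s' ≠ -s)
    (θ : ℝ) (hθ : θ = Real.arccos (inner ℝ s s' : ℝ))
    (w : EuclideanSpace ℝ (Fin 3))
    (hw : w = if s' = s then 0 else (θ / Real.sin θ) • (s' - (inner ℝ s s' : ℝ) • s)) :
    (inner ℝ s w : ℝ) = 0 ∧ ‖w‖ = θ ∧ sphRetract s w = s' := by
  set c : ℝ := (inner ℝ s s' : ℝ) with hc
  have hc1 : c ≤ 1 := by
    calc c ≤ ‖s‖ * ‖s'‖ := real_inner_le_norm s s'
    _ = 1 := by rw [hs, hs']; ring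
  by_cases heq : s' = s
  · subst heq
    have hcc : c = 1 := by
      rw [hc, real_inner_self_eq_norm_sq, hs]; norm_num
    have hθ0 : θ = 0 := by rw [hθ, hcc, Real.arccos_one]
    simp only [if_pos rfl] at hw
    subst hw
    refine ⟨by simp, by simp [hθ0], ?_⟩
    simp [sphRetract, Real.cos_zero]
  · have hclt : c < 1 := by
      rw [hc]
      exact (inner_lt_one_iff_real_of_norm_eq_one hs hs').mpr (fun h => heq h.symm)
    have hθpos : 0 < θ := by rw [hθ]; exact Real.arccos_pos.mpr hclt
    have hθltpi : θ < Real.pi := by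
      rw [hθ]
      refine lt_of_le_of_ne (Real.arccos_le_pi c) (fun h => ?_)
      rw [Real.arccos_eq_pi] at h
      linarith
    have hsinpos : 0 < Real.sin θ := Real.sin_pos_of_pos_of_lt_pi hθpos hθltpi
    have hcosθ : Real.cos θ = c := by
      rw [hθ]; exact Real.cos_arccos (le_of_lt hinner) hc1
    simp only [if_neg heq] at hw
    have hinner_sw : (inner ℝ s w : ℝ) = 0 := by
      rw [hw, real_inner_smul_right, inner_sub_right, real_inner_smul_right,
        real_inner_self_eq_norm_sq, hs, ← hc]
      ring
    -- norm of s' - c • s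
    have hnormsub : ‖s' - c • s‖ = Real.sin θ := by
      have hsq : ‖s' - c • s‖ ^ 2 = Real.sin θ ^ 2 := by
        have hcomm : (inner ℝ s' s : ℝ) = c := by rw [real_inner_comm]
        rw [norm_sub_sq_real, real_inner_smul_right, norm_smul, hcomm]
        rw [hs, hs']
        have := Real.sin_sq_add_cos_sq θ
        rw [hcosθ] at this
        simp only [Real.norm_eq_abs, mul_one, one_pow]
        nlinarith [sq_abs c]
      have h1 : 0 ≤ ‖s' - c • s‖ := norm_nonneg _
      nlinarith
    have hnormw : ‖w‖ = θ := by
      rw [hw, norm_smul, hnormsub, Real.norm_eq_abs,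
        abs_of_pos (div_pos hθpos hsinpos)]
      field_simp
    refine ⟨hinner_sw, hnormw, ?_⟩
    rw [sphRetract, hnormw, hcosθ, sinc, if_neg (ne_of_gt hθpos), hw,
      smul_smul]
    have : Real.sin θ / θ * (θ / Real.sin θ) = 1 := by
      field_simp
    rw [this, one_smul]
    abel
end
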